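/- Let μ and ν be complex Borel measures on ℝ, and let F and G be left-continuous distribution functions of μ and ν respectively (i.e. F(y) - F(x) = μ([x,y)) and similarly for G, for x < y). Then for all x ≤ y, ∫_{[x,y)} F(s) dν(s) = F(y)G(y) - F(x)G(x) - ∫_{[x,y)} G(s+) dμ(s), where G(s+) denotes the right-hand limit of G at s. -/

import Mathlib

open MeasureTheory Set Filter

/-- Integral of a complex-valued function against a real (signed) Borel measure. -/
noncomputable def sInt (m : MeasureTheory.SignedMeasure ℝ) (f : ℝ → ℂ) (s : Set ℝ) : ℂ :=
  (∫ x in s, f x ∂m.toJordanDecomposition.posPart) -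
    ∫ x in s, f x ∂m.toJordanDecomposition.negPart

/-- Integral of a complex-valued function against a complex Borel measure. -/
noncomputable def cInt (m : MeasureTheory.ComplexMeasure ℝ) (f : ℝ → ℂ) (s : Set ℝ) : ℂ :=
  sInt (MeasureTheory.ComplexMeasure.re m) f s +
    Complex.I * sInt (MeasureTheory.ComplexMeasure.im m) f s

/-- `f`, with left-continuous locally-BV derivative representative `f'`, is a solution of the
measure differential equation `-f'' + (1/4) f = z ω f + z² υ f + χ` in the integrated sense. -/
def IsSol (ω : MeasureTheory.SignedMeasure ℝ) (υ : MeasureTheory.Measure ℝ)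
    (χ : MeasureTheory.ComplexMeasure ℝ) (z : ℂ) (f f' : ℝ → ℂ) : Prop :=
  Continuous f ∧
  (∀ x y : ℝ, f y - f x = ∫ s in x..y, f' s) ∧
  (∀ x : ℝ, Filter.Tendsto f' (nhdsWithin x (Set.Iio x)) (nhds (f' x))) ∧
  LocallyBoundedVariationOn f' Set.univ ∧
  ∀ x y : ℝ, x ≤ y →
    -f' y + f' x + (1 / 4 : ℂ) * ∫ s in x..y, f s
      = z * sInt ω f (Set.Ico x y) + z ^ 2 * (∫ s in Set.Ico x y, f s ∂υ)
        + χ (Set.Ico x y)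

open MeasureTheory Set Filter

open scoped Topology ENNReal

namespace IBPaux

/-- Fubini core identity at the lintegral level. -/
lemma core_lintegral (α β : Measure ℝ) [IsFiniteMeasure α] [IsFiniteMeasure β] (x y : ℝ) :
    ∫⁻ s in Ico x y, α (Ico x s) ∂β = ∫⁻ t in Ico x y, β (Ioo t y) ∂α := by
  set S : Set (ℝ × ℝ) := {p : ℝ × ℝ | x ≤ p.1 ∧ p.1 < p.2 ∧ p.2 < y} with hSdef
  have hS : MeasurableSet S := by
    refine MeasurableSet.inter ?_ (MeasurableSet.inter ?_ ?_)
    · exact measurableSet_le measurable_const measurable_fst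
    · exact measurableSet_lt measurable_fst measurable_snd
    · exact measurableSet_lt measurable_snd measurable_const
  have h2 : (α.prod β) S = ∫⁻ s in Ico x y, α (Ico x s) ∂β := by
    rw [Measure.prod_apply_symm hS, ← lintegral_indicator measurableSet_Ico]
    congr 1
    ext s
    by_cases hs : s ∈ Ico x y
    · rw [indicator_of_mem hs]
      congr 1
      ext t
      simp only [hSdef, mem_preimage, mem_setOf_eq, mem_Ico]
      exact ⟨fun h => ⟨h.1, h.2.1⟩, fun h => ⟨h.1, h.2, hs.2⟩⟩
    · rw [indicator_of_notMem hs]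
      have he : ((fun t => (t, s)) ⁻¹' S) = ∅ := by
        ext t
        simp only [hSdef, mem_preimage, mem_setOf_eq, mem_empty_iff_false, iff_false]
        rintro ⟨hxt, hts, hsy⟩
        exact hs ⟨hxt.trans hts.le, hsy⟩
      rw [he, measure_empty]
  have h1 : (α.prod β) S = ∫⁻ t in Ico x y, β (Ioo t y) ∂α := by
    rw [Measure.prod_apply hS, ← lintegral_indicator measurableSet_Ico]
    congr 1
    ext t
    by_cases ht : t ∈ Ico x y
    · rw [indicator_of_mem ht]
      congr 1
      ext s
      simp only [hSdef, mem_preimage, mem_setOf_eq, mem_Ioo]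
      exact ⟨fun h => ⟨h.2.1, h.2.2⟩, fun h => ⟨ht.1, h.1, h.2⟩⟩
    · rw [indicator_of_notMem ht]
      have he : (Prod.mk t ⁻¹' S) = ∅ := by
        ext s
        simp only [hSdef, mem_preimage, mem_setOf_eq, mem_empty_iff_false, iff_false]
        rintro ⟨hxt, hts, hsy⟩
        exact ht ⟨hxt, hts.trans hsy⟩
      rw [he, measure_empty]
  rw [← h1, ← h2]

lemma core_integral (α β : Measure ℝ) [IsFiniteMeasure α] [IsFiniteMeasure β] (x y : ℝ) :
    ∫ s in Ico x y, (α (Ico x s)).toReal ∂β = ∫ t in Ico x y, (β (Ioo t y)).toReal ∂α := by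
  have hma : Measurable fun s => α (Ico x s) :=
    Monotone.measurable fun a b hab => measure_mono (Ico_subset_Ico_right hab)
  have hmb : Measurable fun t => β (Ioo t y) :=
    Antitone.measurable fun a b hab => measure_mono (Ioo_subset_Ioo_left hab)
  rw [integral_toReal hma.aemeasurable (ae_of_all _ fun s => measure_lt_top α _),
    integral_toReal hmb.aemeasurable (ae_of_all _ fun t => measure_lt_top β _),
    core_lintegral]

lemma integrable_bdd {β : Measure ℝ} [IsFiniteMeasure β] {S : Set ℝ} {g : ℝ → ℝ}
    (hg : Measurable g) (C : ℝ) (hC : ∀ s, |g s| ≤ C) : IntegrableOn g S β :=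
  (integrable_const C).mono' hg.aestronglyMeasurable
    (ae_of_all _ fun s => by simpa [Real.norm_eq_abs] using hC s)

lemma integrableOn_a (κ β : Measure ℝ) [IsFiniteMeasure κ] [IsFiniteMeasure β] (x : ℝ)
    (S : Set ℝ) : IntegrableOn (fun s => (κ (Ico x s)).toReal) S β := by
  refine integrable_bdd ?_ (κ univ).toReal fun s => ?_
  · exact (Monotone.measurable fun a b hab =>
      measure_mono (Ico_subset_Ico_right hab)).ennreal_toReal
  · rw [abs_of_nonneg ENNReal.toReal_nonneg]
    exact ENNReal.toReal_mono (measure_ne_top _ _) (measure_mono (subset_univ _))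

lemma integrableOn_b (κ β : Measure ℝ) [IsFiniteMeasure κ] [IsFiniteMeasure β] (y : ℝ)
    (S : Set ℝ) : IntegrableOn (fun t => (κ (Ioo t y)).toReal) S β := by
  refine integrable_bdd ?_ (κ univ).toReal fun s => ?_
  · exact (Antitone.measurable fun a b hab =>
      measure_mono (Ioo_subset_Ioo_left hab)).ennreal_toReal
  · rw [abs_of_nonneg ENNReal.toReal_nonneg]
    exact ENNReal.toReal_mono (measure_ne_top _ _) (measure_mono (subset_univ _))

lemma expand (β : Measure ℝ) [IsFiniteMeasure β] {S : Set ℝ} (hS : MeasurableSet S)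
    (f : ℝ → ℂ) (c : ℂ) (g1 g2 g3 g4 : ℝ → ℝ)
    (h1 : IntegrableOn g1 S β) (h2 : IntegrableOn g2 S β) (h3 : IntegrableOn g3 S β)
    (h4 : IntegrableOn g4 S β)
    (hf : ∀ s ∈ S, f s = c + (((g1 s : ℝ) : ℂ) - ((g2 s : ℝ) : ℂ) +
      Complex.I * (((g3 s : ℝ) : ℂ) - ((g4 s : ℝ) : ℂ)))) :
    ∫ s in S, f s ∂β = ((β S).toReal : ℂ) * c +
      (((∫ s in S, g1 s ∂β : ℝ) : ℂ) - ((∫ s in S, g2 s ∂β : ℝ) : ℂ) +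
        Complex.I * (((∫ s in S, g3 s ∂β : ℝ) : ℂ) - ((∫ s in S, g4 s ∂β : ℝ) : ℂ))) := by
  have h1c : Integrable (fun s => ((g1 s : ℝ) : ℂ)) (β.restrict S) := h1.ofReal
  have h2c : Integrable (fun s => ((g2 s : ℝ) : ℂ)) (β.restrict S) := h2.ofReal
  have h3c : Integrable (fun s => ((g3 s : ℝ) : ℂ)) (β.restrict S) := h3.ofReal
  have h4c : Integrable (fun s => ((g4 s : ℝ) : ℂ)) (β.restrict S) := h4.ofReal
  have hB : Integrable (fun s => ((g1 s : ℝ) : ℂ) - ((g2 s : ℝ) : ℂ)) (β.restrict S) := by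
    exact h1c.sub h2c
  have hC : Integrable (fun s => ((g3 s : ℝ) : ℂ) - ((g4 s : ℝ) : ℂ)) (β.restrict S) := by
    exact h3c.sub h4c
  have hC' : Integrable (fun s => Complex.I * (((g3 s : ℝ) : ℂ) - ((g4 s : ℝ) : ℂ)))
      (β.restrict S) := by exact hC.const_mul Complex.I
  have hBC : Integrable (fun s => (((g1 s : ℝ) : ℂ) - ((g2 s : ℝ) : ℂ)) +
      Complex.I * (((g3 s : ℝ) : ℂ) - ((g4 s : ℝ) : ℂ))) (β.restrict S) := by
    exact hB.add hC'
  have o1 : ∫ s in S, ((g1 s : ℝ) : ℂ) ∂β = ((∫ s in S, g1 s ∂β : ℝ) : ℂ) := integral_ofReal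
  have o2 : ∫ s in S, ((g2 s : ℝ) : ℂ) ∂β = ((∫ s in S, g2 s ∂β : ℝ) : ℂ) := integral_ofReal
  have o3 : ∫ s in S, ((g3 s : ℝ) : ℂ) ∂β = ((∫ s in S, g3 s ∂β : ℝ) : ℂ) := integral_ofReal
  have o4 : ∫ s in S, ((g4 s : ℝ) : ℂ) ∂β = ((∫ s in S, g4 s ∂β : ℝ) : ℂ) := integral_ofReal
  rw [setIntegral_congr_fun hS hf, integral_add (integrable_const c) hBC,
    integral_add hB hC', integral_sub h1c h2c, integral_const_mul, integral_sub h3c h4c,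
    setIntegral_const, o1, o2, o3, o4, Complex.real_smul]
  rfl

lemma cm_apply (m : ComplexMeasure ℝ) {S : Set ℝ} (hS : MeasurableSet S) :
    m S = ((((ComplexMeasure.re m).toJordanDecomposition.posPart S).toReal : ℂ) -
        (((ComplexMeasure.re m).toJordanDecomposition.negPart S).toReal : ℂ) +
      Complex.I * ((((ComplexMeasure.im m).toJordanDecomposition.posPart S).toReal : ℂ) -
        (((ComplexMeasure.im m).toJordanDecomposition.negPart S).toReal : ℂ))) := by
  have hre : (ComplexMeasure.re m) S =
      ((ComplexMeasure.re m).toJordanDecomposition.posPart S).toReal -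
        ((ComplexMeasure.re m).toJordanDecomposition.negPart S).toReal := by
    conv_lhs => rw [← (ComplexMeasure.re m).toSignedMeasure_toJordanDecomposition]
    rw [JordanDecomposition.toSignedMeasure, VectorMeasure.sub_apply,
      Measure.toSignedMeasure_apply_measurable hS, Measure.toSignedMeasure_apply_measurable hS]
    rfl
  have him : (ComplexMeasure.im m) S =
      ((ComplexMeasure.im m).toJordanDecomposition.posPart S).toReal -
        ((ComplexMeasure.im m).toJordanDecomposition.negPart S).toReal := by
    conv_lhs => rw [← (ComplexMeasure.im m).toSignedMeasure_toJordanDecomposition]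
    rw [JordanDecomposition.toSignedMeasure, VectorMeasure.sub_apply,
      Measure.toSignedMeasure_apply_measurable hS, Measure.toSignedMeasure_apply_measurable hS]
    rfl
  have hm : m S = (((ComplexMeasure.re m) S : ℝ) : ℂ) +
      Complex.I * (((ComplexMeasure.im m) S : ℝ) : ℂ) := by
    simp [ComplexMeasure.re_apply, ComplexMeasure.im_apply, Complex.ext_iff]
    exact ⟨rfl, rfl⟩
  rw [hm, hre, him]
  push_cast
  ring

lemma tendsto_Ico_Ioo (κ : Measure ℝ) [IsFiniteMeasure κ] {t y : ℝ} :
    Tendsto (fun n : ℕ => (κ (Ico (t + 1 / (n + 1)) y)).toReal) atTop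
      (𝓝 ((κ (Ioo t y)).toReal)) := by
  have hmono : Monotone fun n : ℕ => Ico (t + 1 / ((n : ℝ) + 1)) y := by
    intro a b hab
    refine Ico_subset_Ico_left ?_
    have : (1 : ℝ) / (b + 1) ≤ 1 / (a + 1) := by
      apply one_div_le_one_div_of_le
      · positivity
      · exact_mod_cast by exact_mod_cast add_le_add_left (Nat.cast_le.2 hab) 1
    linarith
  have hunion : ⋃ n : ℕ, Ico (t + 1 / ((n : ℝ) + 1)) y = Ioo t y := by
    ext s
    simp only [mem_iUnion, mem_Ico, mem_Ioo]
    constructor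
    · rintro ⟨n, h1, h2⟩
      have : (0 : ℝ) < 1 / ((n : ℝ) + 1) := by positivity
      exact ⟨by linarith, h2⟩
    · rintro ⟨h1, h2⟩
      obtain ⟨n, hn⟩ := exists_nat_one_div_lt (sub_pos.mpr h1)
      exact ⟨n, by linarith, h2⟩
  have h := tendsto_measure_iUnion_atTop (μ := κ) hmono
  rw [hunion] at h
  exact (ENNReal.tendsto_toReal (measure_ne_top _ _)).comp h

lemma tendsto_cm (ν : ComplexMeasure ℝ) {t y : ℝ} :
    Tendsto (fun n : ℕ => ν (Ico (t + 1 / (n + 1)) y)) atTop (𝓝 (ν (Ioo t y))) := by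
  have e : ∀ n : ℕ, ν (Ico (t + 1 / ((n : ℝ) + 1)) y) =
      ((((ComplexMeasure.re ν).toJordanDecomposition.posPart (Ico (t + 1 / (n + 1)) y)).toReal : ℂ) -
        (((ComplexMeasure.re ν).toJordanDecomposition.negPart (Ico (t + 1 / (n + 1)) y)).toReal : ℂ) +
      Complex.I *
        ((((ComplexMeasure.im ν).toJordanDecomposition.posPart (Ico (t + 1 / (n + 1)) y)).toReal : ℂ) -
          (((ComplexMeasure.im ν).toJordanDecomposition.negPart (Ico (t + 1 / (n + 1)) y)).toReal : ℂ))) :=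
    fun n => cm_apply ν measurableSet_Ico
  rw [cm_apply ν measurableSet_Ioo]
  refine Tendsto.congr (fun n => (e n).symm) ?_
  refine Tendsto.add (Tendsto.sub ?_ ?_) (Tendsto.const_mul _ (Tendsto.sub ?_ ?_)) <;>
    exact (Complex.continuous_ofReal.tendsto _).comp (tendsto_Ico_Ioo _)

end IBPaux

/-- Integration by parts for Borel measures: if `F`, `G` are left-continuous distribution
functions of the complex measures `μ`, `ν` and `Gp` is the right-limit function of `G`, then
`∫_{[x,y)} F dν = F(y)G(y) - F(x)G(x) - ∫_{[x,y)} G(s+) dμ(s)` for all `x ≤ y`. -/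
theorem integration_by_parts (μ ν : MeasureTheory.ComplexMeasure ℝ) (F G Gp : ℝ → ℂ)
    (hF : ∀ x y : ℝ, x < y → F y - F x = μ (Set.Ico x y))
    (hG : ∀ x y : ℝ, x < y → G y - G x = ν (Set.Ico x y))
    (hFlc : ∀ s : ℝ, Filter.Tendsto F (nhdsWithin s (Set.Iio s)) (nhds (F s)))
    (hGlc : ∀ s : ℝ, Filter.Tendsto G (nhdsWithin s (Set.Iio s)) (nhds (G s)))
    (hGp : ∀ s : ℝ, Filter.Tendsto G (nhdsWithin s (Set.Ioi s)) (nhds (Gp s))) :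
    ∀ x y : ℝ, x ≤ y →
      cInt ν F (Set.Ico x y)
        = F y * G y - F x * G x - cInt μ Gp (Set.Ico x y) := by
  intro x y hxy
  rcases eq_or_lt_of_le hxy with rfl | hxy'
  · simp [cInt, sInt, Set.Ico_self]
  have hSm : MeasurableSet (Ico x y) := measurableSet_Ico
  -- distribution identity for F on [x, y)
  have hFA : ∀ s ∈ Ico x y, F s = F x +
      (((((ComplexMeasure.re μ).toJordanDecomposition.posPart (Ico x s)).toReal : ℂ) -
          (((ComplexMeasure.re μ).toJordanDecomposition.negPart (Ico x s)).toReal : ℂ)) +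
        Complex.I * (((((ComplexMeasure.im μ).toJordanDecomposition.posPart (Ico x s)).toReal : ℂ)) -
          (((ComplexMeasure.im μ).toJordanDecomposition.negPart (Ico x s)).toReal : ℂ))) := by
    intro s hs
    have h0 : F s - F x = μ (Ico x s) := by
      rcases eq_or_lt_of_le hs.1 with rfl | h
      · simp [Set.Ico_self, MeasureTheory.VectorMeasure.empty]
      · exact hF x s h
    rw [IBPaux.cm_apply μ measurableSet_Ico] at h0
    linear_combination h0
  -- right-limit identity for Gp on [x, y)
  have hGB : ∀ t ∈ Ico x y, Gp t = G y - ν (Ioo t y) := by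
    intro t ht
    have htd : Tendsto (fun n : ℕ => t + 1 / ((n : ℝ) + 1)) atTop (𝓝 t) := by
      simpa using tendsto_const_nhds.add (tendsto_one_div_add_atTop_nhds_zero_nat (𝕜 := ℝ))
    have hu : Tendsto (fun n : ℕ => t + 1 / ((n : ℝ) + 1)) atTop (𝓝[>] t) := by
      refine tendsto_nhdsWithin_of_tendsto_nhds_of_eventually_within _ htd
        (Filter.Eventually.of_forall fun n => ?_)
      have : (0 : ℝ) < 1 / ((n : ℝ) + 1) := by positivity
      simp only [Set.mem_Ioi]
      linarith
    have h1 : Tendsto (fun n : ℕ => G (t + 1 / ((n : ℝ) + 1))) atTop (𝓝 (Gp t)) :=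
      (hGp t).comp hu
    have hlt : ∀ᶠ n : ℕ in atTop, t + 1 / ((n : ℝ) + 1) < y := htd.eventually_lt_const ht.2
    have h2 : Tendsto (fun n : ℕ => G y - ν (Ico (t + 1 / ((n : ℝ) + 1)) y)) atTop
        (𝓝 (G y - ν (Ioo t y))) := tendsto_const_nhds.sub (IBPaux.tendsto_cm ν)
    have h3 : Tendsto (fun n : ℕ => G (t + 1 / ((n : ℝ) + 1))) atTop
        (𝓝 (G y - ν (Ioo t y))) := by
      refine h2.congr' ?_
      filter_upwards [hlt] with n hn
      have h4 := hG (t + 1 / ((n : ℝ) + 1)) y hn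
      linear_combination h4
    exact tendsto_nhds_unique h1 h3
  have hGA : ∀ t ∈ Ico x y, Gp t = G y +
      (((((ComplexMeasure.re ν).toJordanDecomposition.negPart (Ioo t y)).toReal : ℂ) -
          (((ComplexMeasure.re ν).toJordanDecomposition.posPart (Ioo t y)).toReal : ℂ)) +
        Complex.I * (((((ComplexMeasure.im ν).toJordanDecomposition.negPart (Ioo t y)).toReal : ℂ)) -
          (((ComplexMeasure.im ν).toJordanDecomposition.posPart (Ioo t y)).toReal : ℂ))) := by
    intro t ht
    have hB := hGB t ht
    rw [IBPaux.cm_apply ν measurableSet_Ioo] at hB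
    linear_combination hB
  -- expansion of ∫ F dβ for any finite measure β
  have hP : ∀ (β : Measure ℝ) [IsFiniteMeasure β], ∫ s in Ico x y, F s ∂β =
      ((β (Ico x y)).toReal : ℂ) * F x +
        ((((∫ t in Ico x y, (β (Ioo t y)).toReal
              ∂(ComplexMeasure.re μ).toJordanDecomposition.posPart : ℝ) : ℂ) -
          ((∫ t in Ico x y, (β (Ioo t y)).toReal
              ∂(ComplexMeasure.re μ).toJordanDecomposition.negPart : ℝ) : ℂ)) +
        Complex.I *
          (((∫ t in Ico x y, (β (Ioo t y)).toReal
              ∂(ComplexMeasure.im μ).toJordanDecomposition.posPart : ℝ) : ℂ) -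
          ((∫ t in Ico x y, (β (Ioo t y)).toReal
              ∂(ComplexMeasure.im μ).toJordanDecomposition.negPart : ℝ) : ℂ))) := by
    intro β _
    rw [IBPaux.expand β hSm F (F x) _ _ _ _ (IBPaux.integrableOn_a _ β x _)
        (IBPaux.integrableOn_a _ β x _) (IBPaux.integrableOn_a _ β x _)
        (IBPaux.integrableOn_a _ β x _) hFA,
      IBPaux.core_integral _ β x y, IBPaux.core_integral _ β x y,
      IBPaux.core_integral _ β x y, IBPaux.core_integral _ β x y]
  -- expansion of ∫ Gp dκ for any finite measure κ
  have hQ : ∀ (κ : Measure ℝ) [IsFiniteMeasure κ], ∫ t in Ico x y, Gp t ∂κ =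
      ((κ (Ico x y)).toReal : ℂ) * G y +
        ((((∫ t in Ico x y, ((ComplexMeasure.re ν).toJordanDecomposition.negPart (Ioo t y)).toReal
              ∂κ : ℝ) : ℂ) -
          ((∫ t in Ico x y, ((ComplexMeasure.re ν).toJordanDecomposition.posPart (Ioo t y)).toReal
              ∂κ : ℝ) : ℂ)) +
        Complex.I *
          (((∫ t in Ico x y, ((ComplexMeasure.im ν).toJordanDecomposition.negPart (Ioo t y)).toReal
              ∂κ : ℝ) : ℂ) -
          ((∫ t in Ico x y, ((ComplexMeasure.im ν).toJordanDecomposition.posPart (Ioo t y)).toReal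
              ∂κ : ℝ) : ℂ))) := by
    intro κ _
    rw [IBPaux.expand κ hSm Gp (G y) _ _ _ _ (IBPaux.integrableOn_b _ κ y _)
        (IBPaux.integrableOn_b _ κ y _) (IBPaux.integrableOn_b _ κ y _)
        (IBPaux.integrableOn_b _ κ y _) hGA]
  have hFy : F y = F x +
      (((((ComplexMeasure.re μ).toJordanDecomposition.posPart (Ico x y)).toReal : ℂ) -
          (((ComplexMeasure.re μ).toJordanDecomposition.negPart (Ico x y)).toReal : ℂ)) +
        Complex.I * (((((ComplexMeasure.im μ).toJordanDecomposition.posPart (Ico x y)).toReal : ℂ)) -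
          (((ComplexMeasure.im μ).toJordanDecomposition.negPart (Ico x y)).toReal : ℂ))) := by
    have h := hF x y hxy'
    rw [IBPaux.cm_apply μ hSm] at h
    linear_combination h
  have hGx : G x = G y -
      (((((ComplexMeasure.re ν).toJordanDecomposition.posPart (Ico x y)).toReal : ℂ) -
          (((ComplexMeasure.re ν).toJordanDecomposition.negPart (Ico x y)).toReal : ℂ)) +
        Complex.I * (((((ComplexMeasure.im ν).toJordanDecomposition.posPart (Ico x y)).toReal : ℂ)) -
          (((ComplexMeasure.im ν).toJordanDecomposition.negPart (Ico x y)).toReal : ℂ))) := by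
    have h := hG x y hxy'
    rw [IBPaux.cm_apply ν hSm] at h
    linear_combination -h
  unfold cInt sInt
  rw [hP ((ComplexMeasure.re ν).toJordanDecomposition.posPart),
    hP ((ComplexMeasure.re ν).toJordanDecomposition.negPart),
    hP ((ComplexMeasure.im ν).toJordanDecomposition.posPart),
    hP ((ComplexMeasure.im ν).toJordanDecomposition.negPart),
    hQ ((ComplexMeasure.re μ).toJordanDecomposition.posPart),
    hQ ((ComplexMeasure.re μ).toJordanDecomposition.negPart),
    hQ ((ComplexMeasure.im μ).toJordanDecomposition.posPart),
    hQ ((ComplexMeasure.im μ).toJordanDecomposition.negPart),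
    hFy, hGx]
  ring
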